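/- Let d ≥ 3, α = (d-2)/2, and let P be a homogeneous polynomial of degree l on ℝ^d. For 0 ≤ k ≤ ⌊l/2⌋ define h_{l-2k}(P) = Σ_{j=0}^{⌊l/2⌋-k} e^l_j(k) r^{2j} Δ^{k+j} P, where e^l_j(k) = (-1)^j (α+l-2k) Γ(α+l-2k-j) / (4^{k+j} k! j! Γ(α+l+1-k)). Then each h_{l-2k}(P) is a harmonic homogeneous polynomial of degree l-2k and P = Σ_{k=0}^{⌊l/2⌋} r^{2k} h_{l-2k}(P). -/

import Mathlib

open MeasureTheory MvPolynomial Finset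

noncomputable section

/-- The Euclidean Laplacian `Δ = Σ_{j=1}^d ∂²/∂x_j²` acting on polynomials on `ℝ^d`. -/
def lap {d : ℕ} (P : MvPolynomial (Fin d) ℝ) : MvPolynomial (Fin d) ℝ :=
  ∑ i, pderiv i (pderiv i P)

/-- The polynomial `r² = |x|² = Σ_j x_j²` on `ℝ^d`. -/
def r2 (d : ℕ) : MvPolynomial (Fin d) ℝ := ∑ i, X i * X i

/-- The coefficients `e^l_j(k) = (-1)^j (α+l-2k) Γ(α+l-2k-j) / (4^{k+j} k! j! Γ(α+l+1-k))`. -/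
def ecoef (α : ℝ) (l j k : ℕ) : ℝ :=
  (-1) ^ j * (α + l - 2 * k) * Real.Gamma (α + l - 2 * k - j) /
    (4 ^ (k + j) * (Nat.factorial k) * (Nat.factorial j) * Real.Gamma (α + l + 1 - k))

/-- The harmonic component `h_{l-2k}(P) = Σ_{j=0}^{⌊l/2⌋-k} e^l_j(k) r^{2j} Δ^{k+j} P`. -/
def harmComp (d : ℕ) (α : ℝ) (l k : ℕ) (P : MvPolynomial (Fin d) ℝ) :
    MvPolynomial (Fin d) ℝ :=
  ∑ j ∈ Finset.range (l / 2 - k + 1), C (ecoef α l j k) * (r2 d) ^ j * lap^[k + j] P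

variable {d : ℕ}

lemma lap_add (p q : MvPolynomial (Fin d) ℝ) : lap (p + q) = lap p + lap q := by
  simp [lap, Finset.sum_add_distrib]

lemma lap_C_mul (a : ℝ) (p : MvPolynomial (Fin d) ℝ) : lap (C a * p) = C a * lap p := by
  simp [lap, pderiv_C_mul, Finset.mul_sum]

lemma lap_sum {ι : Type*} (s : Finset ι) (f : ι → MvPolynomial (Fin d) ℝ) :
    lap (∑ j ∈ s, f j) = ∑ j ∈ s, lap (f j) := by
  unfold lap
  rw [Finset.sum_comm]
  congr 1; ext i
  rw [map_sum, map_sum]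

lemma pderiv_r2 (i : Fin d) : pderiv i (r2 d) = 2 * X i := by
  classical
  unfold r2
  rw [map_sum]
  rw [Finset.sum_eq_single i]
  · simp [pderiv_mul]; ring
  · intro j _ hj
    simp [pderiv_mul, pderiv_X_of_ne hj]
  · simp

variable {d : ℕ}

lemma weight_one_eq (s : Fin d →₀ ℕ) : (Finsupp.weight 1) s = ∑ i, s i := by
  rw [Finsupp.weight_apply, Finsupp.sum_fintype]
  · simp
  · simp

lemma euler {n : ℕ} {P : MvPolynomial (Fin d) ℝ} (hP : P.IsHomogeneous n) :
    ∑ i, X i * pderiv i P = C (n : ℝ) * P := by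
  classical
  have key : ∀ s ∈ P.support, ∑ i, X i * pderiv i (monomial s (coeff s P))
      = C (n : ℝ) * monomial s (coeff s P) := by
    intro s hs
    have hn : ∑ i, s i = n := by
      rw [← weight_one_eq s]
      exact hP (mem_support_iff.mp hs)
    have : ∀ i : Fin d, X i * pderiv i (monomial s (coeff s P))
        = monomial s (coeff s P * s i) := by
      intro i
      rw [pderiv_monomial]
      by_cases h : s i = 0
      · simp [h]
      · have hle : Finsupp.single i 1 ≤ s := by
          rw [Finsupp.single_le_iff]; omega
        rw [X, monomial_mul, one_mul, add_comm, tsub_add_cancel_of_le hle]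
    rw [Finset.sum_congr rfl fun i _ => this i, C_mul_monomial]
    rw [← map_sum, ← Finset.mul_sum]
    congr 1
    rw [mul_comm]
    congr 1
    rw [← hn]
    push_cast
    rfl
  conv_lhs => rw [P.as_sum]
  conv_rhs => rw [P.as_sum]
  rw [Finset.mul_sum]
  rw [← Finset.sum_congr rfl key]
  rw [Finset.sum_comm]
  congr 1; ext i
  rw [← Finset.mul_sum, ← map_sum]

variable {d : ℕ}

lemma isHomogeneous_pderiv {n : ℕ} {P : MvPolynomial (Fin d) ℝ} (hP : P.IsHomogeneous n)
    (i : Fin d) : (pderiv i P).IsHomogeneous (n - 1) := by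
  classical
  conv_lhs => rw [P.as_sum]
  rw [map_sum]
  apply MvPolynomial.IsHomogeneous.sum
  intro s hs
  rw [pderiv_monomial]
  by_cases h : s i = 0
  · simp [h]
    exact isHomogeneous_zero _ _ _
  · apply isHomogeneous_monomial
    have hle : Finsupp.single i 1 ≤ s := by rw [Finsupp.single_le_iff]; omega
    have hd : Finsupp.degree s = n := by
      rw [Finsupp.degree_eq_weight_one]
      exact hP (mem_support_iff.mp hs)
    have : Finsupp.degree (s - Finsupp.single i 1) + Finsupp.degree (Finsupp.single i 1) = n := by
      rw [← hd]
      simp only [Finsupp.degree_eq_weight_one]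
      rw [← map_add, tsub_add_cancel_of_le hle]
    have h1 : Finsupp.degree (Finsupp.single i (1:ℕ)) = 1 := by
      rw [Finsupp.degree_eq_weight_one, ← Pi.one_def, weight_one_eq]
      simp
    omega

lemma isHomogeneous_lap {n : ℕ} {P : MvPolynomial (Fin d) ℝ} (hP : P.IsHomogeneous n) :
    (lap P).IsHomogeneous (n - 2) := by
  apply MvPolynomial.IsHomogeneous.sum
  intro i _
  have := isHomogeneous_pderiv (isHomogeneous_pderiv hP i) i
  rwa [Nat.sub_sub] at this

lemma isHomogeneous_r2 : (r2 d).IsHomogeneous 2 := by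
  apply MvPolynomial.IsHomogeneous.sum
  intro i _
  exact (isHomogeneous_X ℝ i).mul (isHomogeneous_X ℝ i)

lemma pderiv_eq_zero_of_isHomogeneous_zero {P : MvPolynomial (Fin d) ℝ}
    (hP : P.IsHomogeneous 0) (i : Fin d) : pderiv i P = 0 := by
  classical
  conv_lhs => rw [P.as_sum]
  rw [map_sum]
  apply Finset.sum_eq_zero
  intro s hs
  rw [pderiv_monomial]
  have h0 : (Finsupp.weight 1) s = 0 := hP (mem_support_iff.mp hs)
  rw [weight_one_eq] at h0
  have : s i = 0 := by
    by_contra h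
    have := Finset.sum_eq_zero_iff.mp h0 i (Finset.mem_univ i)
    exact h this
  rw [this]
  simp

lemma lap_eq_zero_of_lt_two {n : ℕ} {P : MvPolynomial (Fin d) ℝ} (hP : P.IsHomogeneous n)
    (hn : n < 2) : lap P = 0 := by
  apply Finset.sum_eq_zero
  intro i _
  interval_cases n
  · rw [pderiv_eq_zero_of_isHomogeneous_zero hP i, map_zero]
  · rw [pderiv_eq_zero_of_isHomogeneous_zero (isHomogeneous_pderiv hP i) i]

variable {d : ℕ}

lemma lap_zero : lap (0 : MvPolynomial (Fin d) ℝ) = 0 := by simp [lap]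

lemma isHomogeneous_lap_iterate {l : ℕ} {P : MvPolynomial (Fin d) ℝ} (hP : P.IsHomogeneous l)
    (m : ℕ) : (lap^[m] P).IsHomogeneous (l - 2 * m) := by
  induction m with
  | zero => simpa using hP
  | succ m ih =>
    rw [Function.iterate_succ_apply']
    have := isHomogeneous_lap ih
    rwa [Nat.sub_sub, show 2*m+2 = 2*(m+1) by ring] at this

lemma lap_iterate_eq_zero {l : ℕ} {P : MvPolynomial (Fin d) ℝ} (hP : P.IsHomogeneous l)
    {m : ℕ} (hm : l < 2 * m) : lap^[m] P = 0 := by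
  induction m with
  | zero => omega
  | succ m ih =>
    rw [Function.iterate_succ_apply']
    by_cases h : l < 2 * m
    · rw [ih h, lap_zero]
    · exact lap_eq_zero_of_lt_two (isHomogeneous_lap_iterate hP m) (by omega)

lemma lap_r2_mul {n : ℕ} {Q : MvPolynomial (Fin d) ℝ} (hQ : Q.IsHomogeneous n) :
    lap (r2 d * Q) = C (2 * (d : ℝ) + 4 * n) * Q + r2 d * lap Q := by
  have key : ∀ i : Fin d, pderiv i (pderiv i (r2 d * Q)) =
      C 2 * Q + C 4 * (X i * pderiv i Q) + r2 d * pderiv i (pderiv i Q) := by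
    intro i
    simp only [pderiv_mul, pderiv_r2, pderiv_X_self, map_add]
    rw [show ((2 : MvPolynomial (Fin d) ℝ)) = C 2 from (map_ofNat C 2).symm]
    rw [pderiv_C]
    rw [show (C 4 : MvPolynomial (Fin d) ℝ) = C 2 * 2 from by
      rw [show ((2 : MvPolynomial (Fin d) ℝ)) = C 2 from (map_ofNat C 2).symm, ← C_mul]; norm_num]
    ring
  unfold lap
  rw [Finset.sum_congr rfl fun i _ => key i, Finset.sum_add_distrib, Finset.sum_add_distrib,
    Finset.sum_const, ← Finset.mul_sum, ← Finset.mul_sum, euler hQ, Finset.card_univ,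
    Fintype.card_fin, nsmul_eq_mul]
  have : ((d : MvPolynomial (Fin d) ℝ)) = C (d : ℝ) := by
    simp
  rw [this]
  have h2 : C (2 * (d:ℝ) + 4 * n) * Q = C (d:ℝ) * (C 2 * Q) + C 4 * (C (n:ℝ) * Q) := by
    rw [← mul_assoc, ← mul_assoc, ← C_mul, ← C_mul, ← add_mul, ← C_add]
    ring_nf
  rw [h2]

variable {d : ℕ}

lemma isHomogeneous_r2pow_mul {n : ℕ} {Q : MvPolynomial (Fin d) ℝ} (hQ : Q.IsHomogeneous n)
    (j : ℕ) : (r2 d ^ j * Q).IsHomogeneous (2 * j + n) :=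
  (isHomogeneous_r2.pow j).mul hQ

lemma lap_r2pow_mul {α : ℝ} (hα : α = ((d : ℝ) - 2) / 2) {n : ℕ} {Q : MvPolynomial (Fin d) ℝ}
    (hQ : Q.IsHomogeneous n) (j : ℕ) :
    lap (r2 d ^ (j + 1) * Q) =
      C (4 * (j + 1 : ℝ) * (α + n + (j + 1))) * (r2 d ^ j * Q) + r2 d ^ (j + 1) * lap Q := by
  induction j with
  | zero =>
    rw [pow_one, pow_zero, one_mul, lap_r2_mul hQ]
    congr 2
    rw [hα]; push_cast; ring
  | succ j ih =>
    have h1 : r2 d ^ (j + 2) * Q = r2 d * (r2 d ^ (j + 1) * Q) := by ring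
    rw [h1, lap_r2_mul (isHomogeneous_r2pow_mul hQ (j + 1)), ih]
    rw [mul_add (r2 d),
      show r2 d * (C (4 * ((j:ℝ) + 1) * (α + (n:ℝ) + ((j:ℝ) + 1))) * (r2 d ^ j * Q))
        = C (4 * ((j:ℝ) + 1) * (α + (n:ℝ) + ((j:ℝ) + 1))) * (r2 d ^ (j+1) * Q) from by ring,
      show r2 d * (r2 d ^ (j+1) * lap Q) = r2 d ^ (j+1+1) * lap Q from by ring,
      ← add_assoc, ← add_mul, ← C_add]
    congr 2
    rw [hα]; push_cast; ring

lemma ecoef_rec (α : ℝ) (l k j : ℕ) (hpos : 0 < α + l - 2 * k - (j + 1))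
    (hΓ : Real.Gamma (α + l + 1 - k) ≠ 0) :
    ecoef α l (j + 1) k * (4 * ((j:ℝ) + 1) * (α + l - 2 * k - ((j:ℝ) + 1)))
      = - ecoef α l j k := by
  unfold ecoef
  have hy : (α + l - 2 * k - (j + 1)) ≠ 0 := ne_of_gt hpos
  have hG : Real.Gamma (α + l - 2 * k - j)
      = (α + l - 2 * k - (j + 1)) * Real.Gamma (α + l - 2 * k - (j + 1)) := by
    rw [show α + l - 2 * k - (j:ℝ) = (α + l - 2 * k - ((j:ℝ) + 1)) + 1 by ring]
    rw [Real.Gamma_add_one hy]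
  rw [hG]
  have h1 : ((j+1).factorial : ℝ) = (j + 1) * (j.factorial : ℝ) := by
    push_cast [Nat.factorial_succ]; ring
  have h2 : (4:ℝ) ^ (k + (j+1)) = 4 ^ (k + j) * 4 := by
    rw [show k + (j+1) = (k+j) + 1 by ring, pow_succ]
  have hf : (j.factorial : ℝ) ≠ 0 := Nat.cast_ne_zero.mpr (Nat.factorial_ne_zero j)
  have hk : (k.factorial : ℝ) ≠ 0 := Nat.cast_ne_zero.mpr (Nat.factorial_ne_zero k)
  have h4 : (4:ℝ) ^ (k + j) ≠ 0 := by positivity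
  rw [h1, h2]
  push_cast
  field_simp
  ring

lemma ecoef_zero_zero (α : ℝ) (l : ℕ) (h : 0 < α + l) : ecoef α l 0 0 = 1 := by
  unfold ecoef
  simp only [Nat.cast_zero, pow_zero, mul_zero, sub_zero, Nat.factorial_zero, Nat.cast_one,
    add_zero, one_mul, mul_one]
  rw [Real.Gamma_add_one (ne_of_gt h)]
  have hG : Real.Gamma (α + l) ≠ 0 := ne_of_gt (Real.Gamma_pos_of_pos h)
  field_simp

lemma neg_one_pow_sub {s k : ℕ} (hk : k ≤ s) : ((-1:ℝ)) ^ (s - k) = (-1) ^ s * (-1) ^ k := by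
  have h : s = (s - k) + 2 * k + 0 ∨ s + k = (s - k) + 2 * k := by omega
  have h2 : s + k = (s - k) + 2 * k := by omega
  have : ((-1:ℝ)) ^ (s + k) = (-1) ^ (s - k) := by
    rw [h2, pow_add, pow_mul]
    norm_num
  rw [← this, pow_add]

lemma ecoef_sub_eq (α : ℝ) (l s k : ℕ) (hk : k ≤ s) :
    ecoef α l (s - k) k = (-1)^s * (-1)^k * (α + l - 2*k) * Real.Gamma (α + l - k - s) /
      (4^s * (Nat.factorial k) * (Nat.factorial (s - k)) * Real.Gamma (α + l + 1 - k)) := by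
  unfold ecoef
  rw [Nat.cast_sub hk, neg_one_pow_sub hk, show k + (s - k) = s from by omega]
  rw [show α + (l:ℝ) - 2*k - ((s:ℝ) - k) = α + l - k - s from by ring]

noncomputable def Tel (x : ℝ) (s k : ℕ) : ℝ :=
  (-1)^(s+1) * (-1)^k * k * ((s+1-k : ℕ) : ℝ) * Real.Gamma (x+1-k-s) /
    (4^s * s * (Nat.factorial k) * (Nat.factorial (s+1-k)) * Real.Gamma (x+1-k))

set_option maxHeartbeats 2000000 in
lemma csum_eq_zero (α : ℝ) (l s : ℕ) (hα : 0 < α) (hs : 1 ≤ s) (h2s : 2*s ≤ l) :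
    ∑ k ∈ Finset.range (s+1), ecoef α l (s-k) k = 0 := by
  have hxl : (2*s : ℝ) ≤ l := by exact_mod_cast Nat.cast_le.mpr h2s
  have step : ∀ k ∈ Finset.range (s+1), ecoef α l (s-k) k
      = Tel (α + l) s (k+1) - Tel (α + l) s k := by
    intro k hk
    rw [Finset.mem_range] at hk
    have hks : k ≤ s := by omega
    rw [ecoef_sub_eq α l s k hks]
    unfold Tel
    have hgk : (0:ℝ) < α + l - k := by
      have : (k:ℝ) ≤ s := by exact_mod_cast hks
      nlinarith
    have hgks : (0:ℝ) < α + l - k - s := by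
      have h1 : (k:ℝ) ≤ s := by exact_mod_cast hks
      nlinarith
    have e1 : s + 1 - (k+1) = s - k := by omega
    have e2 : s + 1 - k = (s - k) + 1 := by omega
    have e3 : α + (l:ℝ) + 1 - (k+1:ℕ) = α + l - k := by push_cast; ring
    have e4 : α + (l:ℝ) + 1 - (k+1:ℕ) - s = α + l - k - s := by push_cast; ring
    have e5 : α + (l:ℝ) + 1 - k - s = (α + l - k - s) + 1 := by ring
    have e6 : α + (l:ℝ) + 1 - k = (α + l - k) + 1 := by ring
    rw [e1, e4, e3, e5, e6, Real.Gamma_add_one (ne_of_gt hgks), Real.Gamma_add_one (ne_of_gt hgk)]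
    rw [e2, Nat.factorial_succ (s-k), Nat.factorial_succ k]
    have c1 : ((s - k : ℕ) : ℝ) = (s:ℝ) - k := Nat.cast_sub hks
    push_cast [c1]
    have hΓk : Real.Gamma (α + l - k) ≠ 0 := ne_of_gt (Real.Gamma_pos_of_pos hgk)
    have hΓks : Real.Gamma (α + l - k - s) ≠ 0 := ne_of_gt (Real.Gamma_pos_of_pos hgks)
    have hfk : (Nat.factorial k : ℝ) ≠ 0 := Nat.cast_ne_zero.mpr (Nat.factorial_ne_zero k)
    have hfsk : (Nat.factorial (s-k) : ℝ) ≠ 0 := Nat.cast_ne_zero.mpr (Nat.factorial_ne_zero _)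
    have h4 : (4:ℝ)^s ≠ 0 := by positivity
    have hsr : ((s:ℕ):ℝ) ≠ 0 := by
      simp only [ne_eq, Nat.cast_eq_zero]; omega
    have hcast : (k:ℝ) ≤ s := by exact_mod_cast hks
    have hsk1 : ((s:ℝ) - k + 1) ≠ 0 := by nlinarith
    have hk1 : ((k:ℝ) + 1) ≠ 0 := by positivity
    field_simp
    ring
  rw [Finset.sum_congr rfl step, Finset.sum_range_sub (Tel (α + l) s)]
  have hT0 : Tel (α + l) s 0 = 0 := by unfold Tel; simp
  have hTs : Tel (α + l) s (s+1) = 0 := by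
    unfold Tel
    rw [show s + 1 - (s+1) = 0 from by omega]
    simp
  rw [hT0, hTs, sub_zero]

lemma isHomogeneous_harmComp {d l k : ℕ} {α : ℝ} {P : MvPolynomial (Fin d) ℝ}
    (hP : P.IsHomogeneous l) (hk : k ≤ l / 2) :
    (harmComp d α l k P).IsHomogeneous (l - 2 * k) := by
  unfold harmComp
  apply MvPolynomial.IsHomogeneous.sum
  intro j hj
  rw [Finset.mem_range] at hj
  have h := ((isHomogeneous_C (Fin d) (ecoef α l j k)).mul
    (isHomogeneous_r2.pow j)).mul (isHomogeneous_lap_iterate hP (k + j))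
  rwa [show 0 + 2 * j + (l - 2 * (k + j)) = l - 2 * k from by omega] at h

lemma lap_harmComp {d l k : ℕ} (hd : 3 ≤ d) {α : ℝ} (hα : α = ((d : ℝ) - 2) / 2)
    {P : MvPolynomial (Fin d) ℝ} (hP : P.IsHomogeneous l) (hk : k ≤ l / 2) :
    lap (harmComp d α l k P) = 0 := by
  have hα0 : 0 < α := by
    have : (3:ℝ) ≤ d := by exact_mod_cast hd
    rw [hα]; linarith
  have hΓ : Real.Gamma (α + l + 1 - k) ≠ 0 := by
    have hkl : (k:ℝ) ≤ l := by
      have : k ≤ l := by omega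
      exact_mod_cast this
    exact ne_of_gt (Real.Gamma_pos_of_pos (by linarith))
  set J := l / 2 - k with hJ
  set f : ℕ → MvPolynomial (Fin d) ℝ := fun j =>
    if j = 0 then 0 else C (ecoef α l (j-1) k) * (r2 d ^ (j-1) * lap^[k + j] P) with hf
  have step : ∀ j ∈ Finset.range (J + 1),
      lap (C (ecoef α l j k) * r2 d ^ j * lap^[k + j] P) = f (j+1) - f j := by
    intro j hj
    rw [Finset.mem_range] at hj
    match j with
    | 0 =>
      rw [mul_assoc, pow_zero, one_mul, lap_C_mul, ← Function.iterate_succ_apply' lap]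
      simp [hf]
    | (m+1) =>
      have hmJ : m + 1 ≤ J := by omega
      have hdeg : 2 * (k + (m+1)) ≤ l := by omega
      have hQ : (lap^[k + (m+1)] P).IsHomogeneous (l - 2 * (k + (m+1))) :=
        isHomogeneous_lap_iterate hP _
      rw [mul_assoc, lap_C_mul, lap_r2pow_mul hα hQ m]
      have hn : ((l - 2 * (k + (m+1)) : ℕ) : ℝ) = (l:ℝ) - 2*k - 2*m - 2 := by
        rw [Nat.cast_sub hdeg]; push_cast; ring
      have harg : α + ((l - 2 * (k + (m+1)) : ℕ) : ℝ) + ((m:ℝ) + 1)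
          = α + l - 2 * k - ((m:ℝ) + 1) := by rw [hn]; ring
      have hpos : 0 < α + l - 2 * k - ((m:ℝ) + 1) := by
        have h1 : (m:ℝ) + 1 + 2*k ≤ l := by
          have : m + 1 + 2*k ≤ l := by omega
          exact_mod_cast this
        linarith
      have hrec := ecoef_rec α l k m hpos hΓ
      rw [mul_add, ← mul_assoc, ← C_mul,
        show ecoef α l (m+1) k * (4 * ((m:ℝ) + 1) * (α + ((l - 2 * (k + (m+1)) : ℕ) : ℝ) + ((m:ℝ)+1)))
          = - ecoef α l m k from by rw [harg]; exact hrec]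
      rw [← Function.iterate_succ_apply' lap]
      simp only [hf]
      rw [if_neg (by omega : ¬ (m + 1 + 1 = 0)), if_neg (by omega : ¬ (m + 1 = 0))]
      simp only [Nat.add_sub_cancel]
      rw [show (k + (m + 1)).succ = k + (m + 1 + 1) from rfl, map_neg]
      ring
  unfold harmComp
  rw [lap_sum, Finset.sum_congr rfl step, Finset.sum_range_sub f]
  have hfJ : f (J + 1) = 0 := by
    simp only [hf]
    rw [if_neg (by omega : ¬ (J + 1 = 0))]
    simp only [Nat.add_sub_cancel]
    rw [lap_iterate_eq_zero hP (by omega : l < 2 * (k + (J + 1)))]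
    simp
  rw [hfJ]
  simp [hf]

lemma triangle_sum {M : Type*} [AddCommMonoid M] (L : ℕ) (g : ℕ → ℕ → M) :
    ∑ k ∈ Finset.range (L+1), ∑ j ∈ Finset.range (L - k + 1), g k (k + j)
      = ∑ s ∈ Finset.range (L+1), ∑ k ∈ Finset.range (s+1), g k s := by
  rw [Finset.sum_sigma' (Finset.range (L+1)) (fun k => Finset.range (L - k + 1))
    (fun k j => g k (k + j)),
    Finset.sum_sigma' (Finset.range (L+1)) (fun s => Finset.range (s+1)) (fun s k => g k s)]
  apply Finset.sum_nbij' (fun p => ⟨p.1 + p.2, p.1⟩) (fun p => ⟨p.2, p.1 - p.2⟩)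
  · intro a ha
    simp only [Finset.mem_sigma, Finset.mem_range] at ha ⊢
    omega
  · intro a ha
    simp only [Finset.mem_sigma, Finset.mem_range] at ha ⊢
    omega
  · intro a ha
    simp only [Finset.mem_sigma, Finset.mem_range] at ha
    ext <;> simp <;> omega
  · intro a ha
    simp only [Finset.mem_sigma, Finset.mem_range] at ha
    ext <;> simp <;> omega
  · intro a ha
    rfl

/-- **Explicit canonical decomposition (Theorem 1).** With `α = (d-2)/2`, for a homogeneous
polynomial `P` of degree `l` on `ℝ^d` (`d ≥ 3`), each `h_{l-2k}(P)` given by the explicit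
differential formula is a harmonic homogeneous polynomial of degree `l - 2k`, and
`P = Σ_{k=0}^{⌊l/2⌋} r^{2k} h_{l-2k}(P)`. -/
theorem explicit_canonical_decomposition (d l : ℕ) (hd : 3 ≤ d)
    (α : ℝ) (hα : α = ((d : ℝ) - 2) / 2)
    (P : MvPolynomial (Fin d) ℝ) (hP : P.IsHomogeneous l) :
    (∀ k ∈ Finset.range (l / 2 + 1),
      (harmComp d α l k P).IsHomogeneous (l - 2 * k) ∧ lap (harmComp d α l k P) = 0) ∧
    P = ∑ k ∈ Finset.range (l / 2 + 1), (r2 d) ^ k * harmComp d α l k P := by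
  have hα0 : 0 < α := by
    have : (3:ℝ) ≤ d := by exact_mod_cast hd
    rw [hα]; linarith
  constructor
  · intro k hk
    rw [Finset.mem_range] at hk
    exact ⟨isHomogeneous_harmComp hP (by omega), lap_harmComp hd hα hP (by omega)⟩
  · unfold harmComp
    have h1 : ∀ k ∈ Finset.range (l / 2 + 1),
        (r2 d) ^ k * ∑ j ∈ Finset.range (l / 2 - k + 1), C (ecoef α l j k) * (r2 d) ^ j * lap^[k + j] P
        = ∑ j ∈ Finset.range (l / 2 - k + 1), C (ecoef α l (k + j - k) k) * ((r2 d) ^ (k + j) * lap^[k + j] P) := by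
      intro k hk
      rw [Finset.mul_sum]
      apply Finset.sum_congr rfl
      intro j hj
      rw [show (ecoef α l j k) = ecoef α l (k + j - k) k from by rw [Nat.add_sub_cancel_left]]
      rw [pow_add]
      ring
    rw [Finset.sum_congr rfl h1,
      triangle_sum (l/2) (fun k s => C (ecoef α l (s - k) k) * ((r2 d) ^ s * lap^[s] P))]
    have h2 : ∀ s ∈ Finset.range (l/2+1),
        (∑ k ∈ Finset.range (s+1), C (ecoef α l (s-k) k) * ((r2 d)^s * lap^[s] P))
        = C (∑ k ∈ Finset.range (s+1), ecoef α l (s-k) k) * ((r2 d)^s * lap^[s] P) := by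
      intro s _
      rw [← Finset.sum_mul, map_sum]
    rw [Finset.sum_congr rfl h2]
    rw [Finset.sum_eq_single_of_mem 0 (Finset.mem_range.mpr (by omega))]
    · rw [Finset.sum_range_one]
      have hpos : (0:ℝ) < α + l := by
        have : (0:ℝ) ≤ l := Nat.cast_nonneg l
        linarith
      rw [show (0:ℕ) - 0 = 0 from rfl, ecoef_zero_zero α l hpos]
      simp
    · intro s hs hs0
      rw [Finset.mem_range] at hs
      rw [csum_eq_zero α l s hα0 (by omega) (by omega)]
      simp
end
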